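/- Let Δ be a pure shellable simplicial complex and let e = {a,b} be an edge of Δ. Then the simplicial complex obtained from Δ by subdividing the edge e with a new vertex w is shellable. -/

import Mathlib

open Finset

namespace SC

variable {V : Type*}

/-- The simplicial complex generated by a finite family of faces:
its faces are all the subsets of the given sets. -/
def closure [DecidableEq V] (facets : Finset (Finset V)) : Finset (Finset V) :=
  facets.sup Finset.powerset

/-- A family of finite subsets of `V` is an (abstract) simplicial complex
if it is closed under taking subsets. -/
def IsComplex (Δ : Finset (Finset V)) : Prop :=
  ∀ F ∈ Δ, ∀ G ⊆ F, G ∈ Δ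

/-- The vertex set of a complex. -/
def vertexSet [DecidableEq V] (Δ : Finset (Finset V)) : Finset V := Δ.sup id

/-- The facets (inclusion-maximal faces) of a complex. -/
def facets [DecidableEq V] (Δ : Finset (Finset V)) : Finset (Finset V) :=
  Δ.filter fun F => ∀ G ∈ Δ, F ⊆ G → F = G

/-- `BalancedWith Δ d` : the 1-skeleton of `Δ` admits a proper `d`-coloring. -/
def BalancedWith [DecidableEq V] (Δ : Finset (Finset V)) (d : ℕ) : Prop :=
  ∃ κ : V → Fin d, ∀ v w : V, v ≠ w → ({v, w} : Finset V) ∈ Δ → κ v ≠ κ w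

/-- The link of a face `s` in `Δ`. -/
def link [DecidableEq V] (Δ : Finset (Finset V)) (s : Finset V) : Finset (Finset V) :=
  Δ.filter fun G => Disjoint G s ∧ G ∪ s ∈ Δ

/-- `IsPartition X Fs R` : the boolean intervals `[R F, F]`, `F ∈ Fs`, are pairwise
disjoint and their union is exactly `X`. -/
def IsPartition (X Fs : Finset (Finset V)) (R : Finset V → Finset V) : Prop :=
  (∀ F ∈ Fs, R F ⊆ F) ∧
  (∀ G : Finset V, G ∈ X ↔ ∃ F ∈ Fs, R F ⊆ G ∧ G ⊆ F) ∧
  (∀ F₁ ∈ Fs, ∀ F₂ ∈ Fs, ∀ G : Finset V,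
     R F₁ ⊆ G → G ⊆ F₁ → R F₂ ⊆ G → G ⊆ F₂ → F₁ = F₂)

/-- A complex is partitionable if its set of faces is the disjoint union of boolean
intervals `[R F, F]`, one for each facet `F`. -/
def Partitionable [DecidableEq V] (Δ : Finset (Finset V)) : Prop :=
  ∃ R : Finset V → Finset V, IsPartition Δ (facets Δ) R

/-- A list of facets is a shelling order if for each `i` the family
`{G ⊆ Fᵢ : G ⊄ Fⱼ for all j < i}` has a unique minimal element w.r.t. inclusion. -/
def IsShelling (l : List (Finset V)) : Prop :=
  ∀ i : Fin l.length, ∃! R : Finset V,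
    Minimal (fun G => G ⊆ l.get i ∧ ∀ j : Fin l.length, j < i → ¬ G ⊆ l.get j) R

/-- A complex is shellable if its facets admit a shelling order. -/
def Shellable [DecidableEq V] (Δ : Finset (Finset V)) : Prop :=
  ∃ l : List (Finset V), l.Nodup ∧ l.toFinset = facets Δ ∧ IsShelling l

/-- The faces of cardinality `m` (i.e. dimension `m - 1`) of `Δ`. -/
def kfaces (Δ : Finset (Finset V)) (m : ℕ) : Finset (Finset V) :=
  Δ.filter fun s => s.card = m

/-- Incidence coefficient of the simplicial boundary map: for `G ⊆ H` with
`#H = #G + 1` it equals `(-1) ^ #{u ∈ G : u < v}` where `H = G ∪ {v}`. -/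
def bcoeff [LinearOrder V] (G H : Finset V) : ℤ :=
  if G ⊆ H then ∑ v ∈ H \ G, (-1 : ℤ) ^ (G.filter (· < v)).card else 0

/-- The (reduced, augmented) simplicial boundary map with coefficients in the field `F`,
from chains supported on faces of cardinality `m + 1` to chains supported on faces of
cardinality `m`; faces of cardinality `0` (the empty face) give the augmentation degree. -/
noncomputable def bdry [LinearOrder V] (Δ : Finset (Finset V)) (F : Type*) [Field F] (m : ℕ) :
    ({s // s ∈ kfaces Δ (m + 1)} → F) →ₗ[F] ({s // s ∈ kfaces Δ m} → F) where
  toFun c G := ∑ H : {s // s ∈ kfaces Δ (m + 1)}, (bcoeff G.1 H.1 : F) * c H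
  map_add' c₁ c₂ := by
    funext G
    simp [mul_add, Finset.sum_add_distrib]
  map_smul' a c := by
    funext G
    simp [Finset.mul_sum, smul_eq_mul, mul_left_comm]

/-- Vanishing of the `i`-th reduced simplicial homology of `Δ` with coefficients
in the field `F`. -/
def HomologyVanishes [LinearOrder V] (Δ : Finset (Finset V)) (F : Type*) [Field F]
    (i : ℤ) : Prop :=
  if i < -1 then True
  else if i = -1 then LinearMap.range (bdry Δ F 0) = ⊤
  else LinearMap.ker (bdry Δ F i.toNat) ≤ LinearMap.range (bdry Δ F (i.toNat + 1))

/-- Reisner's criterion: a `(d-1)`-dimensional complex `Δ` is Cohen-Macaulay over the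
field `F` if for every face `s ∈ Δ` (including the empty face) the reduced homology
of the link of `s` vanishes in all degrees `i ≠ d - 1 - #s`. -/
def IsCohenMacaulay [LinearOrder V] (Δ : Finset (Finset V)) (F : Type*) [Field F] : Prop :=
  ∀ s ∈ Δ, ∀ i : ℤ, i ≠ ((Δ.sup Finset.card : ℕ) : ℤ) - 1 - (s.card : ℤ) →
    HomologyVanishes (link Δ s) F i

instance glueVertexDecEq {V : Type*} [LinearOrder V] {N : ℕ} :
    DecidableEq (Finset (V ⊕ₗ (Fin N ×ₗ V))) := Finset.decidableEq

/-- The map sending the vertices of `W` to themselves and any other vertex to its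
copy in the `i`-th component. -/
def glueMap [DecidableEq V] (W : Finset V) {N : ℕ} (i : Fin N) (v : V) :
    V ⊕ₗ (Fin N ×ₗ V) :=
  if v ∈ W then toLex (Sum.inl v) else toLex (Sum.inr (toLex (i, v)))

/-- The complex obtained from `N` disjoint copies of `Q` by identifying them along the
subcomplex `A` (more precisely, along the vertex set of `A`). -/
def glue [LinearOrder V] (Q A : Finset (Finset V)) (N : ℕ) :
    Finset (Finset (V ⊕ₗ (Fin N ×ₗ V))) :=
  Finset.univ.sup fun i : Fin N => Q.image fun s => s.image (glueMap (vertexSet A) i)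

/-- Constructible simplicial complexes. -/
inductive Constructible {V : Type*} [DecidableEq V] : Finset (Finset V) → Prop
  | simplex (s : Finset V) : Constructible s.powerset
  | union (Δ₁ Δ₂ : Finset (Finset V)) :
      Constructible Δ₁ → Constructible Δ₂ →
      Δ₂.sup Finset.card = Δ₁.sup Finset.card →
      (Δ₁ ∩ Δ₂).sup Finset.card + 1 = Δ₁.sup Finset.card →
      Constructible (Δ₁ ∪ Δ₂)

/-- The subdivision of the edge `{a, b}` of `Δ` with a new vertex `w`. -/
def subdivide [DecidableEq V] (Δ : Finset (Finset V)) (a b w : V) : Finset (Finset V) :=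
  Δ.filter (fun s => ¬ ({a, b} : Finset V) ⊆ s)
    ∪ (Δ.filter fun s => ({a, b} : Finset V) ⊆ s).image (fun s => insert w (s.erase a))
    ∪ (Δ.filter fun s => ({a, b} : Finset V) ⊆ s).image (fun s => insert w (s.erase b))

end SC

/-- The facets of the complex `Q*`. -/
def QstarFacets : Finset (Finset ℕ) :=
  {{2,5,6,12}, {1,5,8,11}, {0,1,2,5}, {1,4,8,9}, {1,2,3,10}, {4,5,8,13}, {0,1,2,3},
   {1,4,9,10}, {1,2,9,10}, {1,2,5,6}, {0,2,5,12}, {4,5,7,13}, {1,4,5,8}, {1,2,6,9},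
   {1,3,4,7}, {1,3,4,10}, {1,5,6,11}, {1,4,5,7}, {1,6,9,11}, {1,8,9,11}}

/-- The complex `Q*`. -/
def Qstar : Finset (Finset ℕ) := SC.closure QstarFacets

/-- The facets of the complex `A*`. -/
def AstarFacets : Finset (Finset ℕ) :=
  {{0,2,3}, {4,7,13}, {3,4,10}, {0,2,12}, {3,4,7}, {2,3,10}, {2,6,12}, {4,8,13}}

/-- The complex `A*`, as generated by its facets. -/
def Astar : Finset (Finset ℕ) := SC.closure AstarFacets

/-- The complex `A*`, as the induced subcomplex of `Q*` on `{0,2,3,4,6,7,8,10,12,13}`. -/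
def AstarInd : Finset (Finset ℕ) :=
  Qstar.filter fun s => s ⊆ ({0,2,3,4,6,7,8,10,12,13} : Finset ℕ)

/-- The facets of the complex `Q` of Duval, Goeckner, Klivans and Martin. -/
def QFacets : Finset (Finset ℕ) :=
  {{1,2,4,9}, {1,2,6,9}, {1,5,6,9}, {1,5,8,9}, {1,4,8,9}, {1,4,5,8}, {1,4,5,7},
   {4,5,7,8}, {1,2,5,6}, {0,1,2,5}, {0,2,5,6}, {0,1,2,3}, {1,2,3,4}, {1,3,4,7}}

/-- The complex `Q` of Duval, Goeckner, Klivans and Martin. -/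
def Qdgkm : Finset (Finset ℕ) := SC.closure QFacets

/-- The induced subcomplex `A` of `Q` on the vertex set `{0,2,3,4,6,7,8}`. -/
def Adgkm : Finset (Finset ℕ) :=
  Qdgkm.filter fun s => s ⊆ ({0,2,3,4,6,7,8} : Finset ℕ)

/-- The permutation `τ' = (0 7)(2 4)(6 8)(12 13)`. -/
def tau' : Equiv.Perm ℕ :=
  Equiv.swap 0 7 * Equiv.swap 2 4 * Equiv.swap 6 8 * Equiv.swap 12 13

/-- The permutation `τ = (0 7)(2 4)(6 8)`. -/
def tau : Equiv.Perm ℕ :=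
  Equiv.swap 0 7 * Equiv.swap 2 4 * Equiv.swap 6 8


namespace SubThm
set_option linter.unusedSectionVars false
set_option linter.unusedVariables false

open Finset

variable {V : Type*} [DecidableEq V]

lemma exists_minimal_subset (P : Finset V → Prop) :
    ∀ G, P G → ∃ M, Minimal P M ∧ M ⊆ G := by
  intro G
  induction G using Finset.strongInductionOn with
  | _ G ih =>
    intro hG
    by_cases h : ∀ y, P y → y ⊆ G → G = y
    · exact ⟨G, minimal_iff.2 ⟨hG, fun y hy hle => h y hy hle⟩, subset_rfl⟩
    · push_neg at h
      obtain ⟨y, hy, hyG, hGy⟩ := h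
      have hss : y ⊂ G := lt_of_le_of_ne hyG (fun hh => hGy hh.symm)
      obtain ⟨M, hM, hMy⟩ := ih y hss hy
      exact ⟨M, hM, hMy.trans hyG⟩

lemma shelling_of_exchange (l : List (Finset V))
    (h : ∀ j i : Fin l.length, i < j → ∃ k : Fin l.length, k < j ∧
      l.get i ∩ l.get j ⊆ l.get k ∧ ∃ x, l.get j \ l.get k = {x}) :
    SC.IsShelling l := by
  intro j
  set F : Fin l.length → Finset V := l.get with hF
  set S : Finset V → Prop :=
    fun G => G ⊆ F j ∧ ∀ i : Fin l.length, i < j → ¬ G ⊆ F i with hS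
  set ρ : Finset V := (F j).filter
    (fun x => ∃ k : Fin l.length, k < j ∧ F j \ {x} ⊆ F k) with hρ
  have hρS : S ρ := by
    constructor
    · exact filter_subset _ _
    · intro i hij hsub
      obtain ⟨k, hkj, hik, x, hx⟩ := h j i hij
      have hxm : x ∈ F j \ F k := hx ▸ mem_singleton_self x
      have hxj : x ∈ F j := (mem_sdiff.1 hxm).1
      have hxk : x ∉ F k := (mem_sdiff.1 hxm).2
      have hxρ : x ∈ ρ := by
        refine mem_filter.2 ⟨hxj, k, hkj, ?_⟩
        intro y hy
        rcases mem_sdiff.1 hy with ⟨hyj, hyx⟩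
        by_contra hyk
        have hm : y ∈ F j \ F k := mem_sdiff.2 ⟨hyj, hyk⟩
        rw [hx, mem_singleton] at hm
        exact hyx (mem_singleton.2 hm)
      exact hxk (hik (mem_inter.2 ⟨hsub hxρ, hxj⟩))
  have hρle : ∀ G, S G → ρ ⊆ G := by
    intro G hG x hxρ
    by_contra hxG
    rcases mem_filter.1 hxρ with ⟨hxj, k, hkj, hsub⟩
    have : G ⊆ F k := fun y hy =>
      hsub (mem_sdiff.2 ⟨hG.1 hy, by simp only [mem_singleton]; rintro rfl; exact hxG hy⟩)
    exact hG.2 k hkj this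
  refine ⟨ρ, minimal_iff.2 ⟨hρS, fun y hy hle => le_antisymm (hρle y hy) hle⟩, ?_⟩
  intro M hM
  exact (minimal_iff.1 hM).2 hρS (hρle M (minimal_iff.1 hM).1)

lemma mem_vertexSet_of {Δ : Finset (Finset V)} {s : Finset V} {x : V}
    (hs : s ∈ Δ) (hx : x ∈ s) : x ∈ SC.vertexSet Δ :=
  mem_sup.2 ⟨s, hs, hx⟩

lemma exists_facet {Δ : Finset (Finset V)} {s : Finset V} (hs : s ∈ Δ) :
    ∃ F ∈ SC.facets Δ, s ⊆ F := by
  obtain ⟨F, hF, hmax⟩ := (Δ.filter fun t => s ⊆ t).exists_max_image card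
    ⟨s, mem_filter.2 ⟨hs, subset_rfl⟩⟩
  rcases mem_filter.1 hF with ⟨hFΔ, hsF⟩
  refine ⟨F, mem_filter.2 ⟨hFΔ, fun G hG hFG => ?_⟩, hsF⟩
  exact Finset.eq_of_subset_of_card_le hFG
    (hmax G (mem_filter.2 ⟨hG, hsF.trans hFG⟩))

lemma facets_mem {Δ : Finset (Finset V)} {F : Finset V} (h : F ∈ SC.facets Δ) : F ∈ Δ :=
  (mem_filter.1 h).1

lemma facets_max {Δ : Finset (Finset V)} {F G : Finset V} (h : F ∈ SC.facets Δ)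
    (hG : G ∈ Δ) (hFG : F ⊆ G) : F = G :=
  (mem_filter.1 h).2 G hG hFG

lemma mem_subdivide {Δ : Finset (Finset V)} {a b w : V} {X : Finset V} :
    X ∈ SC.subdivide Δ a b w ↔
      (X ∈ Δ ∧ ¬ ({a, b} : Finset V) ⊆ X) ∨
      (∃ s ∈ Δ, ({a, b} : Finset V) ⊆ s ∧
        (X = insert w (s.erase a) ∨ X = insert w (s.erase b))) := by
  unfold SC.subdivide
  simp only [mem_union, mem_filter, mem_image]
  constructor
  · rintro ((⟨h1, h2⟩ | ⟨s, ⟨hs1, hs2⟩, rfl⟩) | ⟨s, ⟨hs1, hs2⟩, rfl⟩)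
    · exact Or.inl ⟨h1, h2⟩
    · exact Or.inr ⟨s, hs1, hs2, Or.inl rfl⟩
    · exact Or.inr ⟨s, hs1, hs2, Or.inr rfl⟩
  · rintro (⟨h1, h2⟩ | ⟨s, hs1, hs2, (rfl | rfl)⟩)
    · exact Or.inl (Or.inl ⟨h1, h2⟩)
    · exact Or.inl (Or.inr ⟨s, ⟨hs1, hs2⟩, rfl⟩)
    · exact Or.inr ⟨s, ⟨hs1, hs2⟩, rfl⟩

lemma subdivide_comm {Δ : Finset (Finset V)} {a b w : V} :
    SC.subdivide Δ a b w = SC.subdivide Δ b a w := by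
  ext X
  rw [mem_subdivide, mem_subdivide, pair_comm a b]
  constructor <;>
  · rintro (h | ⟨s, h1, h2, h3⟩)
    · exact Or.inl h
    · exact Or.inr ⟨s, h1, h2, h3.symm⟩

lemma facet_sub_aux {Δ : Finset (Finset V)} {a b w : V}
    (hab : a ≠ b) (hw : ∀ s ∈ Δ, w ∉ s)
    {F : Finset V} (hF : F ∈ SC.facets Δ) (heF : ({a, b} : Finset V) ⊆ F) :
    insert w (F.erase a) ∈ SC.facets (SC.subdivide Δ a b w) := by
  have haF : a ∈ F := heF (mem_insert_self _ _)
  have hbF : b ∈ F := heF (by simp)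
  have hwF : w ∉ F := hw F (facets_mem hF)
  refine mem_filter.2 ⟨mem_subdivide.2 (Or.inr ⟨F, facets_mem hF, heF, Or.inl rfl⟩), ?_⟩
  intro G hG hXG
  rcases mem_subdivide.1 hG with ⟨hGΔ, _⟩ | ⟨t, htΔ, hte, (rfl | rfl)⟩
  · exact absurd (hXG (mem_insert_self _ _)) (hw G hGΔ)
  · -- G = insert w (t.erase a)
    have hat : a ∈ t := hte (mem_insert_self _ _)
    have hwt : w ∉ t := hw t htΔ
    have hFt : F.erase a ⊆ t.erase a := by
      intro v hv
      have hvF : v ∈ F := mem_of_mem_erase hv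
      have : v ∈ insert w (t.erase a) := hXG (mem_insert_of_mem hv)
      rcases mem_insert.1 this with rfl | h
      · exact absurd hvF hwF
      · exact h
    have : F ⊆ t := by
      have h1 : F = insert a (F.erase a) := (insert_erase haF).symm
      rw [h1]
      exact insert_subset (hte (mem_insert_self _ _)) (hFt.trans (erase_subset _ _))
    rw [facets_max hF htΔ this]
  · -- G = insert w (t.erase b) : impossible
    exfalso
    have hbX : b ∈ insert w (F.erase a) :=
      mem_insert_of_mem (mem_erase.2 ⟨hab.symm, hbF⟩)
    have hbw : b ≠ w := fun h => hwF (h ▸ hbF)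
    rcases mem_insert.1 (hXG hbX) with h | h
    · exact hbw h
    · exact (mem_erase.1 h).1 rfl

lemma facets_subdivide {Δ : Finset (Finset V)} {a b w : V}
    (hab : a ≠ b) (hw : ∀ s ∈ Δ, w ∉ s) (X : Finset V) :
    X ∈ SC.facets (SC.subdivide Δ a b w) ↔
      (X ∈ SC.facets Δ ∧ ¬ ({a, b} : Finset V) ⊆ X) ∨
      (∃ F ∈ SC.facets Δ, ({a, b} : Finset V) ⊆ F ∧
        (X = insert w (F.erase a) ∨ X = insert w (F.erase b))) := by
  constructor
  · intro hX
    rcases mem_filter.1 hX with ⟨hXsub, hXmax⟩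
    rcases mem_subdivide.1 hXsub with ⟨hXΔ, hXe⟩ | ⟨s, hsΔ, hse, hXeq⟩
    · obtain ⟨F, hF, hXF⟩ := exists_facet hXΔ
      by_cases he : ({a, b} : Finset V) ⊆ F
      · exfalso
        have hwX : w ∉ X := hw X hXΔ
        have : a ∉ X ∨ b ∉ X := by
          by_contra hc
          push_neg at hc
          exact hXe (insert_subset hc.1 (singleton_subset_iff.2 hc.2))
        rcases this with ha | hb
        · have hsub : X ⊆ insert w (F.erase a) := fun v hv =>
            mem_insert_of_mem (mem_erase.2 ⟨fun hh => ha (hh ▸ hv), hXF hv⟩)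
          have hmem : insert w (F.erase a) ∈ SC.subdivide Δ a b w :=
            mem_subdivide.2 (Or.inr ⟨F, facets_mem hF, he, Or.inl rfl⟩)
          have := hXmax _ hmem hsub
          exact hwX (this ▸ mem_insert_self w _)
        · have hsub : X ⊆ insert w (F.erase b) := fun v hv =>
            mem_insert_of_mem (mem_erase.2 ⟨fun hh => hb (hh ▸ hv), hXF hv⟩)
          have hmem : insert w (F.erase b) ∈ SC.subdivide Δ a b w :=
            mem_subdivide.2 (Or.inr ⟨F, facets_mem hF, he, Or.inr rfl⟩)
          have := hXmax _ hmem hsub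
          exact hwX (this ▸ mem_insert_self w _)
      · have hFsub : F ∈ SC.subdivide Δ a b w :=
          mem_subdivide.2 (Or.inl ⟨facets_mem hF, he⟩)
        have := hXmax F hFsub hXF
        exact Or.inl ⟨this ▸ hF, hXe⟩
    · obtain ⟨F, hF, hsF⟩ := exists_facet hsΔ
      have heF : ({a, b} : Finset V) ⊆ F := hse.trans hsF
      rcases hXeq with rfl | rfl
      · have hsub : insert w (s.erase a) ⊆ insert w (F.erase a) :=
          insert_subset_insert _ (erase_subset_erase _ hsF)
        have hmem : insert w (F.erase a) ∈ SC.subdivide Δ a b w :=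
          mem_subdivide.2 (Or.inr ⟨F, facets_mem hF, heF, Or.inl rfl⟩)
        exact Or.inr ⟨F, hF, heF, Or.inl (hXmax _ hmem hsub)⟩
      · have hsub : insert w (s.erase b) ⊆ insert w (F.erase b) :=
          insert_subset_insert _ (erase_subset_erase _ hsF)
        have hmem : insert w (F.erase b) ∈ SC.subdivide Δ a b w :=
          mem_subdivide.2 (Or.inr ⟨F, facets_mem hF, heF, Or.inr rfl⟩)
        exact Or.inr ⟨F, hF, heF, Or.inr (hXmax _ hmem hsub)⟩
  · rintro (⟨hXfac, hXe⟩ | ⟨F, hF, heF, (rfl | rfl)⟩)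
    · refine mem_filter.2 ⟨mem_subdivide.2 (Or.inl ⟨facets_mem hXfac, hXe⟩), ?_⟩
      intro G hG hXG
      rcases mem_subdivide.1 hG with ⟨hGΔ, _⟩ | ⟨t, htΔ, hte, (rfl | rfl)⟩
      · exact facets_max hXfac hGΔ hXG
      · exfalso
        have hwX : w ∉ X := hw X (facets_mem hXfac)
        have : X ⊆ t.erase a := (Finset.subset_insert_iff_of_notMem hwX).1 hXG
        have := facets_max hXfac htΔ (this.trans (erase_subset _ _))
        exact hXe (this ▸ hte)
      · exfalso
        have hwX : w ∉ X := hw X (facets_mem hXfac)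
        have : X ⊆ t.erase b := (Finset.subset_insert_iff_of_notMem hwX).1 hXG
        have := facets_max hXfac htΔ (this.trans (erase_subset _ _))
        exact hXe (this ▸ hte)
    · exact facet_sub_aux hab hw hF heF
    · have := facet_sub_aux hab.symm hw hF (by rwa [pair_comm])
      rwa [subdivide_comm]

section idx
variable {α : Type*} {n : ℕ} (B : Fin n → List α)

def nl : List α := (List.finRange n).flatMap B

def ofs (j : ℕ) : ℕ := (((List.finRange n).take j).flatMap B).length

lemma ofs_zero : ofs B 0 = 0 := rfl

lemma finRange_getElem (j : Fin n) (h : (j : ℕ) < (List.finRange n).length) :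
    (List.finRange n)[(j : ℕ)] = j := by
  rw [List.getElem_finRange]
  apply Fin.ext
  simp

lemma ofs_succ (j : Fin n) : ofs B ((j : ℕ) + 1) = ofs B j + (B j).length := by
  have hj : (j : ℕ) < (List.finRange n).length := by simp [j.isLt]
  rw [ofs, List.take_succ, List.flatMap_append, List.length_append,
    List.getElem?_eq_getElem hj, finRange_getElem j hj]
  simp [ofs]

lemma ofs_mono : Monotone (ofs B) := by
  apply monotone_nat_of_le_succ
  intro j
  rw [ofs, ofs, List.take_succ, List.flatMap_append, List.length_append]
  omega

lemma ofs_top : ofs B n = (nl B).length := by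
  rw [ofs, nl, List.take_of_length_le (by simp)]

lemma nl_decomp (j : Fin n) :
    nl B = ((List.finRange n).take j).flatMap B ++
      (B j ++ ((List.finRange n).drop ((j : ℕ) + 1)).flatMap B) := by
  have hj : (j : ℕ) < (List.finRange n).length := by simp [j.isLt]
  conv_lhs => rw [nl, ← List.take_append_drop (j : ℕ) (List.finRange n)]
  rw [List.flatMap_append, List.drop_eq_getElem_cons hj, List.flatMap_cons,
    finRange_getElem j hj]

lemma lt_length (j : Fin n) {p : ℕ} (hp : p < (B j).length) :
    ofs B j + p < (nl B).length := by
  have h1 : ofs B j + p < ofs B ((j : ℕ) + 1) := by rw [ofs_succ]; omega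
  have h2 : ofs B ((j : ℕ) + 1) ≤ ofs B n := ofs_mono B (by omega)
  rw [ofs_top] at h2
  omega

lemma get_nl (j : Fin n) {p : ℕ} (hp : p < (B j).length) :
    (nl B).get ⟨ofs B j + p, lt_length B j hp⟩ = (B j).get ⟨p, hp⟩ := by
  have h1 : (nl B)[ofs B j + p]? = (B j)[p]? := by
    have e : ofs B (j : ℕ) = (((List.finRange n).take (j : ℕ)).flatMap B).length := rfl
    rw [nl_decomp B j, e, List.getElem?_append_right (Nat.le_add_right _ p), Nat.add_sub_cancel_left,
      List.getElem?_append, if_pos hp]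
  rw [List.get_eq_getElem, List.get_eq_getElem, List.getElem_eq_iff]
  rw [h1]
  simp [List.getElem?_eq_getElem hp]

lemma decomp : ∀ m, m < (nl B).length →
    ∃ (j : Fin n) (p : ℕ) (hp : p < (B j).length), m = ofs B j + p := by
  have key : ∀ t : ℕ, t ≤ n → ∀ m, m < ofs B t →
      ∃ (j : Fin n) (p : ℕ) (hp : p < (B j).length), m = ofs B j + p := by
    intro t
    induction t with
    | zero => intro _ m hm; rw [ofs_zero] at hm; omega
    | succ t ih =>
      intro ht m hm
      have htn : t < n := ht
      have hsucc := ofs_succ B ⟨t, htn⟩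
      by_cases hmt : m < ofs B t
      · exact ih (le_of_lt htn) m hmt
      · refine ⟨⟨t, htn⟩, m - ofs B t, by simp at hsucc ⊢; omega, by simp at hsucc ⊢; omega⟩
  intro m hm
  exact key n le_rfl m (by rwa [ofs_top])

lemma pos_lt_pos {j k : Fin n} {p q : ℕ} (hq : q < (B k).length)
    (h : (k : ℕ) < (j : ℕ) ∨ (k = j ∧ q < p)) : ofs B k + q < ofs B j + p := by
  rcases h with h | ⟨rfl, h⟩
  · have h1 : ofs B k + q < ofs B ((k : ℕ) + 1) := by rw [ofs_succ]; omega
    have h2 : ofs B ((k : ℕ) + 1) ≤ ofs B j := ofs_mono B (by omega)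
    omega
  · omega

lemma pos_lt_cases {j k : Fin n} {p q : ℕ} (hp : p < (B j).length)
    (h : ofs B k + q < ofs B j + p) : (k : ℕ) < (j : ℕ) ∨ (k = j ∧ q < p) := by
  rcases lt_trichotomy (k : ℕ) (j : ℕ) with hlt | heq | hgt
  · exact Or.inl hlt
  · have : k = j := Fin.ext heq
    subst this
    exact Or.inr ⟨rfl, by omega⟩
  · exfalso
    have h1 : ofs B j + p < ofs B ((j : ℕ) + 1) := by rw [ofs_succ]; omega
    have h2 : ofs B ((j : ℕ) + 1) ≤ ofs B k := ofs_mono B (by omega)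
    omega

end idx

section diffs
variable {V : Type*} [DecidableEq V]

lemma diff_eq_singleton {s t : Finset V} {x : V} (hx : x ∈ s) (hxt : x ∉ t)
    (h : s \ {x} ⊆ t) : s \ t = {x} := by
  ext v
  simp only [mem_sdiff, mem_singleton]
  constructor
  · rintro ⟨hvs, hvt⟩
    by_contra hvx
    exact hvt (h (mem_sdiff.2 ⟨hvs, by simpa using hvx⟩))
  · rintro rfl
    exact ⟨hx, hxt⟩

lemma diff_sub_singleton {s t : Finset V} {x y ω : V} (hωs : ω ∉ s) (hys : y ∉ s)
    (hx : x ∈ s) (hxt : x ∉ t) (h : s \ {x} ⊆ t) :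
    s \ (insert ω (t.erase y)) = {x} := by
  ext v
  simp only [mem_sdiff, mem_insert, mem_erase, mem_singleton, not_or]
  constructor
  · rintro ⟨hvs, hvω, hvyt⟩
    have hvy : v ≠ y := fun hh => hys (hh ▸ hvs)
    have hvt : v ∉ t := fun hvt => hvyt ⟨hvy, hvt⟩
    by_contra hvx
    exact hvt (h (mem_sdiff.2 ⟨hvs, by simpa using hvx⟩))
  · rintro rfl
    exact ⟨hx, fun hh => hωs (hh ▸ hx), fun hh => hxt hh.2⟩

lemma sub_diff_sub_eq_singleton {s t : Finset V} {x γ ω : V} (hωs : ω ∉ s) (hωt : ω ∉ t)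
    (hγt : γ ∈ t) (hx : x ∈ s) (hxt : x ∉ t) (h : s \ {x} ⊆ t) :
    (insert ω (s.erase γ)) \ (insert ω (t.erase γ)) = {x} := by
  ext v
  simp only [mem_sdiff, mem_insert, mem_erase, mem_singleton, not_or]
  constructor
  · rintro ⟨hv1, hv2, hv3⟩
    rcases hv1 with rfl | ⟨hvγ, hvs⟩
    · exact absurd rfl hv2
    · have hvt : v ∉ t := fun hvt => hv3 ⟨hvγ, hvt⟩
      by_contra hvx
      exact hvt (h (mem_sdiff.2 ⟨hvs, by simpa using hvx⟩))
  · rintro rfl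
    have hxγ : v ≠ γ := fun hh => hxt (hh ▸ hγt)
    exact ⟨Or.inr ⟨hxγ, hx⟩, fun hh => hωs (hh ▸ hx), fun hh => hxt hh.2⟩

lemma sub_diff_eq_w {s t : Finset V} {δ ω : V} (hωt : ω ∉ t) (h : s.erase δ ⊆ t) :
    (insert ω (s.erase δ)) \ t = {ω} := by
  ext v
  simp only [mem_sdiff, mem_insert, mem_erase, mem_singleton]
  constructor
  · rintro ⟨(rfl | ⟨hvδ, hvs⟩), hvt⟩
    · rfl
    · exact absurd (h (mem_erase.2 ⟨hvδ, hvs⟩)) hvt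
  · rintro rfl
    exact ⟨Or.inl rfl, hωt⟩

lemma sub_diff_sub_other {s : Finset V} {γ δ ω : V} (hωs : ω ∉ s) (hγs : γ ∈ s)
    (hγδ : γ ≠ δ) :
    (insert ω (s.erase δ)) \ (insert ω (s.erase γ)) = {γ} := by
  ext v
  simp only [mem_sdiff, mem_insert, mem_erase, mem_singleton, not_or]
  constructor
  · rintro ⟨hv1, hv2, hv3⟩
    rcases hv1 with rfl | ⟨hvδ, hvs⟩
    · exact absurd rfl hv2
    · by_contra hvγ
      exact hv3 ⟨hvγ, hvs⟩
  · rintro rfl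
    exact ⟨Or.inr ⟨hγδ, hγs⟩, fun hh => hωs (hh ▸ hγs), fun hh => hh.1 rfl⟩

end diffs

end SubThm

theorem subdivision_preserves_shellable {V : Type*} [DecidableEq V]
    (Δ : Finset (Finset V)) (a b w : V)
    (hcplx : SC.IsComplex Δ)
    (hpure : ∀ F ∈ SC.facets Δ, F.card = Δ.sup Finset.card)
    (hshell : SC.Shellable Δ)
    (hedge : ({a, b} : Finset V) ∈ Δ) (hab : a ≠ b)
    (hw : w ∉ SC.vertexSet Δ) :
    SC.Shellable (SC.subdivide Δ a b w) := by
  classical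
  obtain ⟨l, hnd, hfacs, hsh⟩ := hshell
  set n := l.length with hn
  set F : Fin n → Finset V := l.get with hF
  -- basic facts
  have hFfac : ∀ j : Fin n, F j ∈ SC.facets Δ := fun j => by
    rw [← hfacs]
    show l.get j ∈ l.toFinset
    exact List.mem_toFinset.2 (List.get_mem l j)
  have hFΔ : ∀ j : Fin n, F j ∈ Δ := fun j => SubThm.facets_mem (hFfac j)
  have hwf : ∀ s ∈ Δ, w ∉ s := fun s hs hws => hw (SubThm.mem_vertexSet_of hs hws)
  have hwFj : ∀ j : Fin n, w ∉ F j := fun j => hwf _ (hFΔ j)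
  have haw : a ≠ w := fun h => hwf _ hedge (h ▸ mem_insert_self a {b})
  have hbw : b ≠ w := fun h => hwf _ hedge (by rw [← h]; simp)
  have hFinj : ∀ {i j : Fin n}, F i = F j → i = j := fun {i j} h =>
    List.nodup_iff_injective_get.1 hnd h
  have habm : ∀ {j : Fin n}, ({a, b} : Finset V) ⊆ F j → a ∈ F j ∧ b ∈ F j :=
    fun {j} h => ⟨h (mem_insert_self a {b}), h (by simp)⟩
  -- the restriction sets
  have hR : ∀ j : Fin n, ∃ R : Finset V,
      (R ⊆ F j ∧ ∀ i : Fin n, i < j → ¬ R ⊆ F i) ∧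
      (∀ G : Finset V, G ⊆ F j → (∀ i : Fin n, i < j → ¬ G ⊆ F i) → R ⊆ G) := by
    intro j
    obtain ⟨R, hRmin, hRuniq⟩ := hsh j
    refine ⟨R, (minimal_iff.1 hRmin).1, ?_⟩
    intro G hG1 hG2
    obtain ⟨M, hM, hMG⟩ := SubThm.exists_minimal_subset
      (fun G => G ⊆ F j ∧ ∀ i : Fin n, i < j → ¬ G ⊆ F i) G ⟨hG1, hG2⟩
    have := hRuniq M hM
    exact this ▸ hMG
  choose R hRS hRmin using hR
  have P1 : ∀ (j : Fin n) (x : V), x ∈ R j → ∃ k : Fin n, k < j ∧ F j \ {x} ⊆ F k := by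
    intro j x hx
    by_contra hcon
    push_neg at hcon
    have hmin := hRmin j (F j \ {x}) sdiff_subset (fun i hi hsub => hcon i hi hsub)
    exact (mem_sdiff.1 (hmin hx)).2 (mem_singleton_self x)
  have P3 : ∀ (j k : Fin n) (x : V), k ≠ j → F j \ {x} ⊆ F k → x ∈ F j → x ∉ F k := by
    intro j k x hkj hsub hxj hxk
    have hjk : F j ⊆ F k := by
      intro v hv
      by_cases hvx : v = x
      · exact hvx ▸ hxk
      · exact hsub (mem_sdiff.2 ⟨hv, by simpa using hvx⟩)
    exact hkj (hFinj (SubThm.facets_max (hFfac j) (hFΔ k) hjk).symm)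
  have SE : ∀ (j i : Fin n), i < j → ∀ G : Finset V, G ⊆ F i → G ⊆ F j →
      ∃ (x : V) (k : Fin n), k < j ∧ x ∈ F j ∧ x ∉ G ∧ F j \ {x} ⊆ F k ∧ x ∉ F k := by
    intro j i hij G hGi hGj
    have hnR : ¬ R j ⊆ G := by
      intro hsub
      exact ((hRS j).2 i hij) (hsub.trans hGi)
    obtain ⟨x, hxR, hxG⟩ := not_subset.1 hnR
    obtain ⟨k, hkj, hks⟩ := P1 j x hxR
    exact ⟨x, k, hkj, (hRS j).1 hxR, hxG, hks,
      P3 j k x (ne_of_lt hkj) hks ((hRS j).1 hxR)⟩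
  -- choice of the first/second subdivided copy for each facet containing the edge
  have hcd : ∀ j : Fin n, ∃ x y : V,
      ((x = a ∧ y = b) ∨ (x = b ∧ y = a)) ∧
      ((∃ k : Fin n, k < j ∧ F j \ {x} ⊆ F k) ∨
        ((¬ ∃ k : Fin n, k < j ∧ F j \ {a} ⊆ F k) ∧
         (¬ ∃ k : Fin n, k < j ∧ F j \ {b} ⊆ F k))) := by
    intro j
    by_cases hA : ∃ k : Fin n, k < j ∧ F j \ {a} ⊆ F k
    · exact ⟨a, b, Or.inl ⟨rfl, rfl⟩, Or.inl hA⟩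
    · by_cases hB : ∃ k : Fin n, k < j ∧ F j \ {b} ⊆ F k
      · exact ⟨b, a, Or.inr ⟨rfl, rfl⟩, Or.inl hB⟩
      · exact ⟨a, b, Or.inl ⟨rfl, rfl⟩, Or.inr ⟨hA, hB⟩⟩
  choose c d hcd1 hcd2 using hcd
  have hcab : ∀ j : Fin n, c j = a ∨ c j = b := by
    intro j; rcases hcd1 j with ⟨h, _⟩ | ⟨h, _⟩
    · exact Or.inl h
    · exact Or.inr h
  have hdab : ∀ j : Fin n, d j = a ∨ d j = b := by
    intro j; rcases hcd1 j with ⟨_, h⟩ | ⟨_, h⟩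
    · exact Or.inr h
    · exact Or.inl h
  have hcdne : ∀ j : Fin n, c j ≠ d j := by
    intro j
    rcases hcd1 j with ⟨h1, h2⟩ | ⟨h1, h2⟩ <;> rw [h1, h2]
    · exact hab
    · exact hab.symm
  -- the new list of facets
  set B : Fin n → List (Finset V) := fun j =>
    if ({a, b} : Finset V) ⊆ F j then
      [insert w ((F j).erase (c j)), insert w ((F j).erase (d j))]
    else [F j] with hB
  have hBpos : ∀ j : Fin n, ({a, b} : Finset V) ⊆ F j →
      B j = [insert w ((F j).erase (c j)), insert w ((F j).erase (d j))] := by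
    intro j h; simp only [hB]; rw [if_pos h]
  have hBneg : ∀ j : Fin n, ¬ ({a, b} : Finset V) ⊆ F j → B j = [F j] := by
    intro j h; simp only [hB]; rw [if_neg h]
  have hE : ∀ (j : Fin n) (p : ℕ) (hp : p < (B j).length),
      (¬ ({a, b} : Finset V) ⊆ F j ∧ p = 0 ∧ (B j).get ⟨p, hp⟩ = F j) ∨
      (({a, b} : Finset V) ⊆ F j ∧
        ((p = 0 ∧ (B j).get ⟨p, hp⟩ = insert w ((F j).erase (c j))) ∨
         (p = 1 ∧ (B j).get ⟨p, hp⟩ = insert w ((F j).erase (d j))))) := by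
    intro j p hp
    by_cases h : ({a, b} : Finset V) ⊆ F j
    · right
      refine ⟨h, ?_⟩
      have hlen : (B j).length = 2 := by rw [hBpos j h]; rfl
      have hp2 : p = 0 ∨ p = 1 := by omega
      rcases hp2 with rfl | rfl
      · exact Or.inl ⟨rfl, by simp [hBpos j h]⟩
      · exact Or.inr ⟨rfl, by simp [hBpos j h]⟩
    · left
      have hlen : (B j).length = 1 := by rw [hBneg j h]; rfl
      have hp0 : p = 0 := by omega
      subst hp0
      exact ⟨h, rfl, by simp [hBneg j h]⟩
  have hmemB : ∀ (k : Fin n) (y : V), ({a, b} : Finset V) ⊆ F k → (y = a ∨ y = b) →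
      ∃ (q : ℕ) (hq : q < (B k).length),
        (B k).get ⟨q, hq⟩ = insert w ((F k).erase y) := by
    intro k y hek hy
    rcases hcd1 k with ⟨h1, h2⟩ | ⟨h1, h2⟩ <;> rcases hy with rfl | rfl
    · exact ⟨0, by simp [hBpos k hek], by simp [hBpos k hek, h1]⟩
    · exact ⟨1, by simp [hBpos k hek], by simp [hBpos k hek, h2]⟩
    · exact ⟨1, by simp [hBpos k hek], by simp [hBpos k hek, h2]⟩
    · exact ⟨0, by simp [hBpos k hek], by simp [hBpos k hek, h1]⟩
  have hyFj : ∀ (j : Fin n) (y : V), (y = a ∨ y = b) → ({a, b} : Finset V) ⊆ F j →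
      y ∈ F j := by
    intro j y hy h
    rcases hy with rfl | rfl
    exacts [(habm h).1, (habm h).2]
  have hkey : ∀ (i j : Fin n) (y z : V), ({a, b} : Finset V) ⊆ F i →
      ({a, b} : Finset V) ⊆ F j → (y = a ∨ y = b) → (z = a ∨ z = b) →
      insert w ((F i).erase y) = insert w ((F j).erase z) → y = z ∧ F i = F j := by
    intro i j y z hei hej hy hz heq
    have hwi : w ∉ (F i).erase y := fun h => hwFj i (mem_of_mem_erase h)
    have hwj : w ∉ (F j).erase z := fun h => hwFj j (mem_of_mem_erase h)
    have herase : (F i).erase y = (F j).erase z := by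
      have h2 := congrArg (fun s : Finset V => s.erase w) heq
      simpa [Finset.erase_insert hwi, Finset.erase_insert hwj] using h2
    by_cases hyz : y = z
    · subst hyz
      refine ⟨rfl, ?_⟩
      rw [← Finset.insert_erase (hyFj i y hy hei), ← Finset.insert_erase (hyFj j y hy hej),
        herase]
    · exfalso
      have hyj : y ∈ (F j).erase z := mem_erase.2 ⟨hyz, hyFj j y hy hej⟩
      rw [← herase] at hyj
      exact (mem_erase.1 hyj).1 rfl
  refine ⟨SubThm.nl B, ?_, ?_, ?_⟩
  · -- Nodup
    rw [List.nodup_iff_injective_get]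
    intro m1 m2 heq
    obtain ⟨j1, p1, hp1, hm1⟩ := SubThm.decomp B m1 m1.isLt
    obtain ⟨j2, p2, hp2, hm2⟩ := SubThm.decomp B m2 m2.isLt
    have hm1' : m1 = ⟨SubThm.ofs B j1 + p1, SubThm.lt_length B j1 hp1⟩ := Fin.ext hm1
    have hm2' : m2 = ⟨SubThm.ofs B j2 + p2, SubThm.lt_length B j2 hp2⟩ := Fin.ext hm2
    rw [hm1', hm2'] at heq
    rw [SubThm.get_nl B j1 hp1, SubThm.get_nl B j2 hp2] at heq
    have key : j1 = j2 ∧ p1 = p2 := by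
      rcases hE j1 p1 hp1 with ⟨hne1, hp10, hX1⟩ | ⟨he1, hc1⟩ <;>
        rcases hE j2 p2 hp2 with ⟨hne2, hp20, hX2⟩ | ⟨he2, hc2⟩
      · rw [hX1, hX2] at heq
        exact ⟨hFinj heq, by omega⟩
      · exfalso
        rcases hc2 with ⟨_, hX2⟩ | ⟨_, hX2⟩ <;>
        · rw [hX1, hX2] at heq
          exact hwFj j1 (by rw [heq]; exact mem_insert_self w _)
      · exfalso
        rcases hc1 with ⟨_, hX1⟩ | ⟨_, hX1⟩ <;>
        · rw [hX1, hX2] at heq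
          exact hwFj j2 (by rw [← heq]; exact mem_insert_self w _)
      · rcases hc1 with ⟨hp1v, hX1⟩ | ⟨hp1v, hX1⟩ <;>
          rcases hc2 with ⟨hp2v, hX2⟩ | ⟨hp2v, hX2⟩ <;>
          rw [hX1, hX2] at heq
        · obtain ⟨hyz, hFij⟩ := hkey j1 j2 _ _ he1 he2 (hcab j1) (hcab j2) heq
          exact ⟨hFinj hFij, by omega⟩
        · obtain ⟨hyz, hFij⟩ := hkey j1 j2 _ _ he1 he2 (hcab j1) (hdab j2) heq
          have hj := hFinj hFij
          subst hj
          exact absurd hyz (hcdne j1)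
        · obtain ⟨hyz, hFij⟩ := hkey j1 j2 _ _ he1 he2 (hdab j1) (hcab j2) heq
          have hj := hFinj hFij
          subst hj
          exact absurd hyz.symm (hcdne j1)
        · obtain ⟨hyz, hFij⟩ := hkey j1 j2 _ _ he1 he2 (hdab j1) (hdab j2) heq
          exact ⟨hFinj hFij, by omega⟩
    obtain ⟨h1, h2⟩ := key
    subst h1
    subst h2
    rw [hm1', hm2']
  · -- toFinset = facets
    ext X
    rw [List.mem_toFinset, SubThm.facets_subdivide hab hwf X]
    constructor
    · intro hX
      obtain ⟨m, hm⟩ := List.mem_iff_get.1 hX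
      obtain ⟨j, p, hp, hmv⟩ := SubThm.decomp B m m.isLt
      have hm' : m = ⟨SubThm.ofs B j + p, SubThm.lt_length B j hp⟩ := Fin.ext hmv
      rw [hm'] at hm
      rw [SubThm.get_nl B j hp] at hm
      rcases hE j p hp with ⟨hne, _, hXv⟩ | ⟨he, hc⟩
      · rw [hXv] at hm
        exact Or.inl ⟨hm ▸ hFfac j, hm ▸ hne⟩
      · refine Or.inr ⟨F j, hFfac j, he, ?_⟩
        rcases hc with ⟨_, hXv⟩ | ⟨_, hXv⟩
        · rw [hXv] at hm
          rcases hcab j with h | h <;> rw [h] at hm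
          exacts [Or.inl hm.symm, Or.inr hm.symm]
        · rw [hXv] at hm
          rcases hdab j with h | h <;> rw [h] at hm
          exacts [Or.inl hm.symm, Or.inr hm.symm]
    · rintro (⟨hXfac, hXe⟩ | ⟨Fc, hFc, heF, hXv⟩)
      · have hXl : X ∈ l := by
          rw [← List.mem_toFinset, hfacs]
          exact hXfac
        obtain ⟨m0, hm0⟩ := List.mem_iff_get.1 hXl
        have hFm0 : F m0 = X := hm0
        have hne : ¬ ({a, b} : Finset V) ⊆ F m0 := by rw [hFm0]; exact hXe
        have hq : 0 < (B m0).length := by rw [hBneg m0 hne]; simp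
        refine List.mem_iff_get.2 ⟨⟨SubThm.ofs B m0 + 0, SubThm.lt_length B m0 hq⟩, ?_⟩
        rw [SubThm.get_nl B m0 hq]
        simp [hBneg m0 hne, hFm0]
      · have hFcl : Fc ∈ l := by
          rw [← List.mem_toFinset, hfacs]
          exact hFc
        obtain ⟨m0, hm0⟩ := List.mem_iff_get.1 hFcl
        have hFm0 : F m0 = Fc := hm0
        have he0 : ({a, b} : Finset V) ⊆ F m0 := by rw [hFm0]; exact heF
        rcases hXv with rfl | rfl
        · obtain ⟨q, hq, hval⟩ := hmemB m0 a he0 (Or.inl rfl)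
          refine List.mem_iff_get.2 ⟨⟨SubThm.ofs B m0 + q, SubThm.lt_length B m0 hq⟩, ?_⟩
          rw [SubThm.get_nl B m0 hq, hval, hFm0]
        · obtain ⟨q, hq, hval⟩ := hmemB m0 b he0 (Or.inr rfl)
          refine List.mem_iff_get.2 ⟨⟨SubThm.ofs B m0 + q, SubThm.lt_length B m0 hq⟩, ?_⟩
          rw [SubThm.get_nl B m0 hq, hval, hFm0]
  · -- shelling
    apply SubThm.shelling_of_exchange
    intro j' i' hij'
    obtain ⟨j2, p2, hp2, hm2⟩ := SubThm.decomp B j' j'.isLt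
    obtain ⟨j1, p1, hp1, hm1⟩ := SubThm.decomp B i' i'.isLt
    have hrel : (j1 : ℕ) < (j2 : ℕ) ∨ (j1 = j2 ∧ p1 < p2) :=
      SubThm.pos_lt_cases B hp2 (by rw [← hm1, ← hm2]; exact hij')
    have hj'eq : j' = ⟨SubThm.ofs B j2 + p2, SubThm.lt_length B j2 hp2⟩ := Fin.ext hm2
    have hi'eq : i' = ⟨SubThm.ofs B j1 + p1, SubThm.lt_length B j1 hp1⟩ := Fin.ext hm1
    have hgj : (SubThm.nl B).get j' = (B j2).get ⟨p2, hp2⟩ := by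
      rw [hj'eq]; exact SubThm.get_nl B j2 hp2
    have hgi : (SubThm.nl B).get i' = (B j1).get ⟨p1, hp1⟩ := by
      rw [hi'eq]; exact SubThm.get_nl B j1 hp1
    have emit : ∀ (k : Fin n) (q : ℕ) (hq : q < (B k).length),
        ((k : ℕ) < (j2 : ℕ) ∨ (k = j2 ∧ q < p2)) →
        ((B j1).get ⟨p1, hp1⟩ ∩ (B j2).get ⟨p2, hp2⟩ ⊆ (B k).get ⟨q, hq⟩) →
        (∃ x, (B j2).get ⟨p2, hp2⟩ \ (B k).get ⟨q, hq⟩ = {x}) →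
        ∃ k' : Fin (SubThm.nl B).length, k' < j' ∧
          (SubThm.nl B).get i' ∩ (SubThm.nl B).get j' ⊆ (SubThm.nl B).get k' ∧
          ∃ x, (SubThm.nl B).get j' \ (SubThm.nl B).get k' = {x} := by
      intro k q hq hlt hsub hdiff
      refine ⟨⟨SubThm.ofs B k + q, SubThm.lt_length B k hq⟩, ?_, ?_, ?_⟩
      · have h1 : SubThm.ofs B k + q < SubThm.ofs B j2 + p2 := SubThm.pos_lt_pos B hq hlt
        have h2 : (j' : ℕ) = SubThm.ofs B j2 + p2 := hm2
        exact Fin.lt_def.2 (by rw [h2]; exact h1)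
      · rw [hgi, hgj, SubThm.get_nl B k hq]; exact hsub
      · rw [hgj, SubThm.get_nl B k hq]; exact hdiff
    have mkek : ∀ (j : Fin n) (x : V) (k : Fin n), ({a, b} : Finset V) ⊆ F j →
        x ≠ a → x ≠ b → F j \ {x} ⊆ F k → ({a, b} : Finset V) ⊆ F k := by
      intro j x k hej hxa hxb hsub v hv
      rcases mem_insert.1 hv with rfl | hv'
      · exact hsub (mem_sdiff.2 ⟨(habm hej).1, by simpa using hxa.symm⟩)
      · have hvb := mem_singleton.1 hv'
        subst hvb
        exact hsub (mem_sdiff.2 ⟨(habm hej).2, by simpa using hxb.symm⟩)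
    have mkGk : ∀ (G : Finset V) (j k : Fin n) (x : V), G ⊆ F j → x ∉ G →
        F j \ {x} ⊆ F k → G ⊆ F k := by
      intro G j k x hGj hxG hsub v hv
      refine hsub (mem_sdiff.2 ⟨hGj hv, ?_⟩)
      simp only [mem_singleton]
      rintro rfl
      exact hxG hv
    have hX1w : (B j1).get ⟨p1, hp1⟩ ⊆ insert w (F j1) := by
      rcases hE j1 p1 hp1 with ⟨_, _, hX1⟩ | ⟨_, hc1⟩
      · rw [hX1]; exact fun v hv => mem_insert_of_mem hv
      · rcases hc1 with ⟨_, hX1⟩ | ⟨_, hX1⟩ <;> rw [hX1] <;>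
          exact insert_subset_insert w (erase_subset _ _)
    rcases hE j2 p2 hp2 with ⟨hne2, hp20, hX2⟩ | ⟨he2, hc2⟩
    · -- CASE I : the target facet is an unsubdivided one
      have hj12 : j1 < j2 := by
        rcases hrel with h | ⟨rfl, h⟩
        · exact h
        · exfalso; omega
      have hIG : (B j1).get ⟨p1, hp1⟩ ∩ (B j2).get ⟨p2, hp2⟩ ⊆ F j1 ∩ F j2 := by
        rw [hX2]
        intro v hv
        rcases mem_inter.1 hv with ⟨hv1, hv2⟩
        rcases mem_insert.1 (hX1w hv1) with rfl | hvF1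
        · exact absurd hv2 (hwFj j2)
        · exact mem_inter.2 ⟨hvF1, hv2⟩
      obtain ⟨x, k, hkj, hxj, hxG, hxsub, hxk⟩ :=
        SE j2 j1 hj12 (F j1 ∩ F j2) inter_subset_left inter_subset_right
      have hGk : F j1 ∩ F j2 ⊆ F k := mkGk _ j2 k x inter_subset_right hxG hxsub
      by_cases hek : ({a, b} : Finset V) ⊆ F k
      · obtain ⟨y, hyab, hyF2⟩ : ∃ y, (y = a ∨ y = b) ∧ y ∉ F j2 := by
          by_cases ha2 : a ∈ F j2
          · refine ⟨b, Or.inr rfl, fun hb2 => ?_⟩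
            exact hne2 (insert_subset ha2 (singleton_subset_iff.2 hb2))
          · exact ⟨a, Or.inl rfl, ha2⟩
        obtain ⟨q, hq, hKval⟩ := hmemB k y hek hyab
        apply emit k q hq (Or.inl hkj)
        · rw [hKval]
          intro v hv
          have hvG := hIG hv
          have hv2 : v ∈ F j2 := (mem_inter.1 hvG).2
          refine mem_insert_of_mem (mem_erase.2 ⟨?_, hGk hvG⟩)
          rintro rfl
          exact hyF2 hv2
        · rw [hKval, hX2]
          exact ⟨x, SubThm.diff_sub_singleton (hwFj j2) hyF2 hxj hxk hxsub⟩
      · have hq : 0 < (B k).length := by rw [hBneg k hek]; simp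
        have hKval : (B k).get ⟨0, hq⟩ = F k := by simp [hBneg k hek]
        apply emit k 0 hq (Or.inl hkj)
        · rw [hKval]
          exact fun v hv => hGk (hIG hv)
        · rw [hKval, hX2]
          exact ⟨x, SubThm.diff_eq_singleton hxj hxk hxsub⟩
    · -- CASE II : the target facet contains the edge
      rcases hc2 with ⟨hp20, hX2⟩ | ⟨hp21, hX2⟩
      · -- first copy : vertex c j2 removed
        have hj12 : j1 < j2 := by
          rcases hrel with h | ⟨rfl, h⟩
          · exact h
          · exfalso; omega
        rcases hE j1 p1 hp1 with ⟨hne1, hp10, hX1⟩ | ⟨he1, hc1⟩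
        · -- earlier facet unsubdivided
          rcases hcd2 j2 with ⟨k, hkj, hsubc⟩ | ⟨hnA, hnB⟩
          · -- there is a witness for c j2
            have hcj2 : c j2 ∈ F j2 := hyFj j2 _ (hcab j2) he2
            have hck : c j2 ∉ F k := P3 j2 k _ (ne_of_lt hkj) hsubc hcj2
            have hek : ¬ ({a, b} : Finset V) ⊆ F k := fun hh => hck (hyFj k _ (hcab j2) hh)
            have hq : 0 < (B k).length := by rw [hBneg k hek]; simp
            have hKval : (B k).get ⟨0, hq⟩ = F k := by simp [hBneg k hek]
            apply emit k 0 hq (Or.inl hkj)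
            · rw [hKval, hX1, hX2]
              intro v hv
              rcases mem_inter.1 hv with ⟨hv1, hv2⟩
              rcases mem_insert.1 hv2 with rfl | hv2'
              · exact absurd hv1 (hwFj j1)
              · exact hsubc (mem_sdiff.2 ⟨(mem_erase.1 hv2').2,
                  by simpa using (mem_erase.1 hv2').1⟩)
            · rw [hKval, hX2]
              refine ⟨w, SubThm.sub_diff_eq_w (hwFj k) ?_⟩
              intro v hv
              exact hsubc (mem_sdiff.2 ⟨(mem_erase.1 hv).2, by simpa using (mem_erase.1 hv).1⟩)
          · -- no witness for a nor b
            obtain ⟨x, k, hkj, hxj, hxG, hxsub, hxk⟩ :=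
              SE j2 j1 hj12 (F j1 ∩ F j2) inter_subset_left inter_subset_right
            have hxa : x ≠ a := by rintro rfl; exact hnA ⟨k, hkj, hxsub⟩
            have hxb : x ≠ b := by rintro rfl; exact hnB ⟨k, hkj, hxsub⟩
            have hek := mkek j2 x k he2 hxa hxb hxsub
            obtain ⟨q, hq, hKval⟩ := hmemB k (c j2) hek (hcab j2)
            have hGk : F j1 ∩ F j2 ⊆ F k := mkGk _ j2 k x inter_subset_right hxG hxsub
            apply emit k q hq (Or.inl hkj)
            · rw [hKval, hX1, hX2]
              intro v hv
              rcases mem_inter.1 hv with ⟨hv1, hv2⟩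
              rcases mem_insert.1 hv2 with rfl | hv2'
              · exact mem_insert_self _ _
              · exact mem_insert_of_mem (mem_erase.2 ⟨(mem_erase.1 hv2').1,
                  hGk (mem_inter.2 ⟨hv1, (mem_erase.1 hv2').2⟩)⟩)
            · rw [hKval, hX2]
              exact ⟨x, SubThm.sub_diff_sub_eq_singleton (hwFj j2) (hwFj k)
                (hyFj k _ (hcab j2) hek) hxj hxk hxsub⟩
        · -- earlier facet subdivided
          obtain ⟨y, hyab, hX1⟩ : ∃ y, (y = a ∨ y = b) ∧
              (B j1).get ⟨p1, hp1⟩ = insert w ((F j1).erase y) := by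
            rcases hc1 with ⟨_, h⟩ | ⟨_, h⟩
            exacts [⟨c j1, hcab j1, h⟩, ⟨d j1, hdab j1, h⟩]
          obtain ⟨x, k, hkj, hxj, hxG, hxsub, hxk⟩ :=
            SE j2 j1 hj12 (F j1 ∩ F j2) inter_subset_left inter_subset_right
          have hxa : x ≠ a := by
            rintro rfl; exact hxG (mem_inter.2 ⟨(habm he1).1, (habm he2).1⟩)
          have hxb : x ≠ b := by
            rintro rfl; exact hxG (mem_inter.2 ⟨(habm he1).2, (habm he2).2⟩)
          have hek := mkek j2 x k he2 hxa hxb hxsub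
          obtain ⟨q, hq, hKval⟩ := hmemB k (c j2) hek (hcab j2)
          have hGk : F j1 ∩ F j2 ⊆ F k := mkGk _ j2 k x inter_subset_right hxG hxsub
          apply emit k q hq (Or.inl hkj)
          · rw [hKval, hX1, hX2]
            intro v hv
            rcases mem_inter.1 hv with ⟨hv1, hv2⟩
            rcases mem_insert.1 hv2 with rfl | hv2'
            · exact mem_insert_self _ _
            · rcases mem_insert.1 hv1 with rfl | hv1'
              · exact mem_insert_self _ _
              · exact mem_insert_of_mem (mem_erase.2 ⟨(mem_erase.1 hv2').1,
                  hGk (mem_inter.2 ⟨(mem_erase.1 hv1').2, (mem_erase.1 hv2').2⟩)⟩)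
          · rw [hKval, hX2]
            exact ⟨x, SubThm.sub_diff_sub_eq_singleton (hwFj j2) (hwFj k)
              (hyFj k _ (hcab j2) hek) hxj hxk hxsub⟩
      · -- second copy : vertex d j2 removed
        rcases hrel with hj12 | ⟨heq12, hp1lt⟩
        case _ =>
          have hj12' : j1 < j2 := hj12
          rcases hE j1 p1 hp1 with ⟨hne1, hp10, hX1⟩ | ⟨he1, hc1⟩
          · -- earlier facet unsubdivided
            by_cases hγG : c j2 ∈ F j1
            · by_cases hδw : ∃ m : Fin n, m < j2 ∧ F j2 \ {d j2} ⊆ F m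
              · obtain ⟨m, hmj, hmsub⟩ := hδw
                have hδm : d j2 ∉ F m :=
                  P3 j2 m _ (ne_of_lt hmj) hmsub (hyFj j2 _ (hdab j2) he2)
                have hem : ¬ ({a, b} : Finset V) ⊆ F m :=
                  fun hh => hδm (hyFj m _ (hdab j2) hh)
                have hq : 0 < (B m).length := by rw [hBneg m hem]; simp
                have hKval : (B m).get ⟨0, hq⟩ = F m := by simp [hBneg m hem]
                apply emit m 0 hq (Or.inl hmj)
                · rw [hKval, hX1, hX2]
                  intro v hv
                  rcases mem_inter.1 hv with ⟨hv1, hv2⟩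
                  rcases mem_insert.1 hv2 with rfl | hv2'
                  · exact absurd hv1 (hwFj j1)
                  · exact hmsub (mem_sdiff.2 ⟨(mem_erase.1 hv2').2,
                      by simpa using (mem_erase.1 hv2').1⟩)
                · rw [hKval, hX2]
                  refine ⟨w, SubThm.sub_diff_eq_w (hwFj m) ?_⟩
                  intro v hv
                  exact hmsub (mem_sdiff.2 ⟨(mem_erase.1 hv).2,
                    by simpa using (mem_erase.1 hv).1⟩)
              · obtain ⟨x, k, hkj, hxj, hxG, hxsub, hxk⟩ :=
                  SE j2 j1 hj12' (F j1 ∩ F j2) inter_subset_left inter_subset_right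
                have hxγ : x ≠ c j2 := by
                  rintro rfl
                  exact hxG (mem_inter.2 ⟨hγG, hyFj j2 _ (hcab j2) he2⟩)
                have hxδ : x ≠ d j2 := by
                  rintro rfl
                  exact hδw ⟨k, hkj, hxsub⟩
                have hxab : x ≠ a ∧ x ≠ b := by
                  rcases hcd1 j2 with ⟨h1, h2⟩ | ⟨h1, h2⟩
                  · exact ⟨fun hh => hxγ (by rw [h1]; exact hh),
                      fun hh => hxδ (by rw [h2]; exact hh)⟩
                  · exact ⟨fun hh => hxδ (by rw [h2]; exact hh),
                      fun hh => hxγ (by rw [h1]; exact hh)⟩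
                have hek := mkek j2 x k he2 hxab.1 hxab.2 hxsub
                obtain ⟨q, hq, hKval⟩ := hmemB k (d j2) hek (hdab j2)
                have hGk : F j1 ∩ F j2 ⊆ F k := mkGk _ j2 k x inter_subset_right hxG hxsub
                apply emit k q hq (Or.inl hkj)
                · rw [hKval, hX1, hX2]
                  intro v hv
                  rcases mem_inter.1 hv with ⟨hv1, hv2⟩
                  rcases mem_insert.1 hv2 with rfl | hv2'
                  · exact absurd hv1 (hwFj j1)
                  · exact mem_insert_of_mem (mem_erase.2 ⟨(mem_erase.1 hv2').1,
                      hGk (mem_inter.2 ⟨hv1, (mem_erase.1 hv2').2⟩)⟩)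
                · rw [hKval, hX2]
                  exact ⟨x, SubThm.sub_diff_sub_eq_singleton (hwFj j2) (hwFj k)
                    (hyFj k _ (hdab j2) hek) hxj hxk hxsub⟩
            · -- c j2 ∉ F j1 : use the first copy of the same block
              have hq0 : 0 < (B j2).length := by rw [hBpos j2 he2]; simp
              have hK : (B j2).get ⟨0, hq0⟩ = insert w ((F j2).erase (c j2)) := by
                simp [hBpos j2 he2]
              apply emit j2 0 hq0 (Or.inr ⟨rfl, by omega⟩)
              · rw [hK, hX1, hX2]
                intro v hv
                rcases mem_inter.1 hv with ⟨hv1, hv2⟩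
                rcases mem_insert.1 hv2 with rfl | hv2'
                · exact absurd hv1 (hwFj j1)
                · refine mem_insert_of_mem (mem_erase.2 ⟨?_, (mem_erase.1 hv2').2⟩)
                  rintro rfl
                  exact hγG hv1
              · rw [hK, hX2]
                exact ⟨c j2, SubThm.sub_diff_sub_other (hwFj j2)
                  (hyFj j2 _ (hcab j2) he2) (hcdne j2)⟩
          · -- earlier facet subdivided
            obtain ⟨y, hyab, hX1⟩ : ∃ y, (y = a ∨ y = b) ∧
                (B j1).get ⟨p1, hp1⟩ = insert w ((F j1).erase y) := by
              rcases hc1 with ⟨_, h⟩ | ⟨_, h⟩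
              exacts [⟨c j1, hcab j1, h⟩, ⟨d j1, hdab j1, h⟩]
            obtain ⟨x, k, hkj, hxj, hxG, hxsub, hxk⟩ :=
              SE j2 j1 hj12' (F j1 ∩ F j2) inter_subset_left inter_subset_right
            have hxa : x ≠ a := by
              rintro rfl; exact hxG (mem_inter.2 ⟨(habm he1).1, (habm he2).1⟩)
            have hxb : x ≠ b := by
              rintro rfl; exact hxG (mem_inter.2 ⟨(habm he1).2, (habm he2).2⟩)
            have hek := mkek j2 x k he2 hxa hxb hxsub
            obtain ⟨q, hq, hKval⟩ := hmemB k (d j2) hek (hdab j2)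
            have hGk : F j1 ∩ F j2 ⊆ F k := mkGk _ j2 k x inter_subset_right hxG hxsub
            apply emit k q hq (Or.inl hkj)
            · rw [hKval, hX1, hX2]
              intro v hv
              rcases mem_inter.1 hv with ⟨hv1, hv2⟩
              rcases mem_insert.1 hv2 with rfl | hv2'
              · exact mem_insert_self _ _
              · rcases mem_insert.1 hv1 with rfl | hv1'
                · exact mem_insert_self _ _
                · exact mem_insert_of_mem (mem_erase.2 ⟨(mem_erase.1 hv2').1,
                    hGk (mem_inter.2 ⟨(mem_erase.1 hv1').2, (mem_erase.1 hv2').2⟩)⟩)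
            · rw [hKval, hX2]
              exact ⟨x, SubThm.sub_diff_sub_eq_singleton (hwFj j2) (hwFj k)
                (hyFj k _ (hdab j2) hek) hxj hxk hxsub⟩
        case _ =>
          -- same block : the earlier element is the first copy
          subst heq12
          have hp10 : p1 = 0 := by omega
          subst hp10
          have hq0 : 0 < (B j1).length := by rw [hBpos j1 he2]; simp
          have hK : (B j1).get ⟨0, hq0⟩ = insert w ((F j1).erase (c j1)) := by
            simp [hBpos j1 he2]
          apply emit j1 0 hq0 (Or.inr ⟨rfl, by omega⟩)
          · exact inter_subset_left
          · rw [hK, hX2]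
            exact ⟨c j1, SubThm.sub_diff_sub_other (hwFj j1)
              (hyFj j1 _ (hcab j1) he2) (hcdne j1)⟩
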